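/- The formal power series f satisfying f = 1 + x f + (d−1) x f² with f(0) = 1 also satisfies f = (1 + ((d−1)/d)(f−1)) · 1/(1 − x(1 + ((d−1)/d)(f−1))), as an identity of formal power series. -/

import Mathlib

open PowerSeries in
/-- The power series `f` with `f = 1 + x f + (d−1) x f²`, `f(0)=1`, satisfies
`f = (1 + ((d−1)/d)(f−1)) · (1 − x(1 + ((d−1)/d)(f−1)))⁻¹`. -/
theorem guillotine_gf_eq' (d : ℕ) (hd : 2 ≤ d) (f : PowerSeries ℚ)
    (hf0 : constantCoeff f = 1)
    (hf : f = 1 + X * f + C ((d : ℚ) - 1) * X * f ^ 2) :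
    f = (1 + C (((d : ℚ) - 1) / d) * (f - 1)) *
          (1 - X * (1 + C (((d : ℚ) - 1) / d) * (f - 1)))⁻¹ := by
  have hd0 : (d : ℚ) ≠ 0 := by positivity
  have hc : C (((d : ℚ) - 1) / d) * C ((d : ℚ) - 1)
      = C ((d : ℚ) - 1) - C (((d : ℚ) - 1) / d) := by
    rw [← map_mul, ← map_sub]
    congr 1
    field_simp
  rw [PowerSeries.eq_mul_inv_iff_mul_eq]
  · linear_combination (1 - C (((d : ℚ) - 1) / d)) * hf - X * f ^ 2 * hc
  · simp
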